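/- Let F be a probability distribution on ℝ symmetric around 0 with a continuous single-peaked density f that is strictly decreasing where positive on [0,∞), and let P > 0. There exists a Markov kernel G^c(·|p) on ℝ with: (i) G^c(·|p) = δ_p (no movement) for p ≥ P; (ii) for p < P, G^c(·|p) moves only mass to [P, ∞); (iii) the total mass moved is F(P) - 1/2; and (iv) the pushforward distribution G(A) = ∫ G^c(A|p) dF(p) has density g̃(y) = (f(y) + f(y-2P))/2, which is symmetric around P. -/

import Mathlib

open Set MeasureTheory ProbabilityTheory

/-- For a symmetric single-peaked density `f` (strictly decreasing
where positive on `[0,∞)`) with distribution `μ` and cdf `F`, and `P > 0`, there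
is a Markov kernel that (i) leaves every price `p ≥ P` unmoved, (ii) from `p < P`
moves mass only to `[P,∞)`, (iii) moves total mass `F P - 1/2`, and (iv) whose
induced final distribution has density `g̃ y = (f y + f (y - 2P))/2`, symmetric
around `P`. -/
theorem stmt_11 (f : ℝ → ℝ) (F : ℝ → ℝ) (P : ℝ) (hP : 0 < P)
    (hf_nonneg : ∀ x, 0 ≤ f x) (hf_cont : Continuous f) (hf_int : Integrable f)
    (hf_one : ∫ x, f x = 1)
    (hf_sym : ∀ x, f (-x) = f x)
    (hf_anti : AntitoneOn f (Set.Ici 0)) (hf_mono : MonotoneOn f (Set.Iic 0))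
    (hf_strict : ∀ x y, 0 ≤ x → x < y → 0 < f y → f y < f x)
    (hF : ∀ x, F x = ∫ y in Set.Iic x, f y)
    (μ : Measure ℝ) (hμ : μ = volume.withDensity (fun y => ENNReal.ofReal (f y)))
    (gt : ℝ → ℝ) (hgt : ∀ y, gt y = (f y + f (y - 2 * P)) / 2) :
    ∃ κ : Kernel ℝ ℝ, IsMarkovKernel κ ∧
      (∀ p, P ≤ p → κ p = Measure.dirac p) ∧
      (∀ p, p < P → κ p (Set.Iio P \ {p}) = 0) ∧
      (∫ p, (κ p {p}ᶜ).toReal ∂μ = F P - 1 / 2) ∧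
      (∀ A : Set ℝ, MeasurableSet A →
        ∫ p, (κ p A).toReal ∂μ = ∫ y in A, gt y) ∧
      (∀ x, gt (P + x) = gt (P - x)) := by
  have hfm : Measurable f := hf_cont.measurable
  have hf2_int : Integrable (fun y => f (y - 2 * P)) := hf_int.comp_sub_right _
  have hf2m : Measurable (fun y => f (y - 2 * P)) :=
    hfm.comp (measurable_id.sub_const _)
  have hgt' : gt = fun y => (f y + f (y - 2 * P)) / 2 := funext hgt
  have hgt_int : Integrable gt := by
    rw [hgt']; exact (hf_int.add hf2_int).div_const 2
  have hgt_meas : Measurable gt := by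
    rw [hgt']; exact ((hfm.add hf2m).div_const 2)
  have hgt_nonneg : ∀ y, 0 ≤ gt y := by
    intro y; rw [hgt]
    have := hf_nonneg y; have := hf_nonneg (y - 2 * P); linarith
  -- reflection
  have hrefl : ∀ a : ℝ, ∫ y in Iic a, f y = ∫ y in Ici (-a), f y := by
    intro a
    rw [← integral_indicator measurableSet_Iic, ← integral_indicator measurableSet_Ici]
    rw [← integral_neg_eq_self ((Iic a).indicator f) volume]
    congr 1; funext y
    simp only [Set.indicator_apply, mem_Iic, mem_Ici]
    by_cases hy : -a ≤ y
    · rw [if_pos (by linarith), if_pos hy]; exact hf_sym y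
    · rw [if_neg (fun h => hy (by linarith)), if_neg hy]
  -- basic set-integral values
  have hIio : ∀ a : ℝ, ∫ y in Iio a, f y = F a := by
    intro a; rw [hF a, integral_Iic_eq_integral_Iio]
  have hIciIoi : ∀ a : ℝ, ∫ y in Ici a, f y = ∫ y in Ioi a, f y := fun a =>
    integral_Ici_eq_integral_Ioi
  have hIci : ∀ a : ℝ, ∫ y in Ici a, f y = 1 - F a := by
    intro a
    have h2 := intervalIntegral.integral_Iic_add_Ioi (b := a) (μ := volume)
      hf_int.integrableOn hf_int.integrableOn
    rw [hf_one, ← hF a] at h2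
    rw [hIciIoi]; linarith
  have hFneg : ∀ a : ℝ, F (-a) = 1 - F a := by
    intro a
    rw [hF (-a), hrefl (-a), neg_neg, hIci]
  have hF0 : F 0 = 1 / 2 := by
    have := hFneg 0; rw [neg_zero] at this; linarith
  -- translation
  have htrans : ∀ a : ℝ, ∫ y in Ici a, f (y - 2 * P) = ∫ y in Ici (a - 2 * P), f y := by
    intro a
    rw [← integral_indicator measurableSet_Ici, ← integral_indicator measurableSet_Ici]
    rw [← integral_sub_right_eq_self ((Ici (a - 2 * P)).indicator f) (2 * P)]
    congr 1; funext y
    simp only [Set.indicator_apply, mem_Ici, sub_le_sub_iff_right]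
  have htransIio : ∀ a : ℝ, ∫ y in Iio a, f (y - 2 * P) = ∫ y in Iio (a - 2 * P), f y := by
    intro a
    rw [← integral_indicator measurableSet_Iio, ← integral_indicator measurableSet_Iio]
    rw [← integral_sub_right_eq_self ((Iio (a - 2 * P)).indicator f) (2 * P)]
    congr 1; funext y
    simp only [Set.indicator_apply, mem_Iio, sub_lt_sub_iff_right]
  have hT1 : ∫ y in Ici P, f (y - 2 * P) = F P := by
    rw [htrans P]
    have : P - 2 * P = -P := by ring
    rw [this, hIci, hFneg]; ring
  have hT2 : ∫ y in Iio P, f (y - 2 * P) = 1 - F P := by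
    rw [htransIio P]
    have : P - 2 * P = -P := by ring
    rw [this]
    have := hIio (-P)
    rw [this, hFneg]
  -- h and m
  set m : ℝ := F P - 1 / 2 with hm_def
  have hh_int : Integrable (fun y => (f (y - 2 * P) - f y) / 2) :=
    (hf2_int.sub hf_int).div_const 2
  have hIciInt : ∫ y in Ici P, (f (y - 2 * P) - f y) / 2 = m := by
    rw [integral_div, integral_sub (hf2_int.integrableOn) (hf_int.integrableOn),
      hT1, hIci]
    rw [hm_def]; ring
  have hIioInt : ∫ y in Iio P, (f y - f (y - 2 * P)) / 2 = m := by
    rw [integral_div, integral_sub (hf_int.integrableOn) (hf2_int.integrableOn),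
      hIio, hT2, hm_def]; ring
  -- positivity of m
  have hf0 : 0 < f 0 := by
    by_contra h
    push_neg at h
    have h0 : f 0 = 0 := le_antisymm h (hf_nonneg 0)
    have hz : ∀ x : ℝ, f x = 0 := by
      intro x
      rcases le_or_gt 0 x with hx | hx
      · have h1 : f x ≤ f 0 := hf_anti self_mem_Ici hx hx
        linarith [hf_nonneg x]
      · have h1 : f (-x) ≤ f 0 :=
          hf_anti self_mem_Ici (by simp only [mem_Ici]; linarith) (by linarith)
        have h2 := hf_sym x
        linarith [hf_nonneg (-x)]
    have hzero : (∫ x, f x) = 0 := by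
      rw [show f = fun _ => (0:ℝ) from funext hz]; simp
    rw [hf_one] at hzero; norm_num at hzero
  have hm_pos : 0 < m := by
    have hsplit : F P = F 0 + ∫ y in Ioc 0 P, f y := by
      rw [hF P, hF 0, ← setIntegral_union (Iic_disjoint_Ioc le_rfl) measurableSet_Ioc
        (hf_int.integrableOn) (hf_int.integrableOn), Iic_union_Ioc_eq_Iic hP.le]
    have hpos : 0 < ∫ y in Ioc 0 P, f y := by
      rw [setIntegral_pos_iff_support_of_nonneg_ae
        (ae_of_all _ (fun y => hf_nonneg y)) hf_int.integrableOn]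
      obtain ⟨δ, hδ, hball⟩ := Metric.isOpen_iff.mp (isOpen_Ioi.preimage hf_cont) 0 hf0
      set ε := min δ P with hε
      have hε0 : 0 < ε := lt_min hδ hP
      have hsub : Ioo 0 ε ⊆ Function.support f ∩ Ioc 0 P := by
        intro x hx
        constructor
        · have hmem : x ∈ Metric.ball (0:ℝ) δ := by
            rw [Metric.mem_ball, Real.dist_eq, sub_zero, abs_of_pos hx.1]
            exact lt_of_lt_of_le hx.2 (min_le_left _ _)
          exact ne_of_gt (hball hmem)
        · exact ⟨hx.1, le_of_lt (lt_of_lt_of_le hx.2 (min_le_right _ _))⟩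
      calc (0:ENNReal) < ENNReal.ofReal ε := by simpa using hε0
        _ = volume (Ioo 0 ε) := by rw [Real.volume_Ioo, sub_zero]
        _ ≤ volume (Function.support f ∩ Ioc 0 P) := measure_mono hsub
    rw [hm_def, ← hF0]; linarith
  have hμint : ∀ g : ℝ → ℝ, Measurable g → ∫ p, g p ∂μ = ∫ p, g p * f p := by
    intro g hg
    rw [hμ]
    have hfnn : Measurable (fun y => (f y).toNNReal) := hfm.real_toNNReal
    rw [show (fun y => ENNReal.ofReal (f y)) = (fun y => ((f y).toNNReal : ENNReal))
      from rfl]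
    rw [integral_withDensity_eq_integral_smul hfnn g]
    congr 1; funext p
    rw [NNReal.smul_def, smul_eq_mul, Real.coe_toNNReal _ (hf_nonneg p), mul_comm]
  -- pointwise facts about gt
  have habs : ∀ x : ℝ, f x = f |x| := by
    intro x
    rcases abs_cases x with ⟨h1, _⟩ | ⟨h1, _⟩
    · rw [h1]
    · rw [h1, hf_sym]
  have hgt_le : ∀ p, p < P → gt p ≤ f p := by
    intro p hp
    rw [hgt]
    have h1 : f (p - 2 * P) = f (2 * P - p) := by
      rw [show p - 2 * P = -(2 * P - p) by ring, hf_sym]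
    have habs_le : |p| ≤ 2 * P - p := by
      rcases abs_cases p with ⟨h2, h3⟩ | ⟨h2, h3⟩ <;> linarith
    have h2 : f (2 * P - p) ≤ f |p| :=
      hf_anti (abs_nonneg p) (le_trans (abs_nonneg p) habs_le) habs_le
    have h3 := habs p
    linarith
  have hgt_zero : ∀ p, p < P → f p = 0 → gt p = 0 := by
    intro p hp hfp
    refine le_antisymm ?_ (hgt_nonneg p)
    calc gt p ≤ f p := hgt_le p hp
      _ = 0 := hfp
  have hh_nonneg : ∀ y, P ≤ y → 0 ≤ (f (y - 2 * P) - f y) / 2 := by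
    intro y hy
    have habs_le : |y - 2 * P| ≤ y := by
      rcases abs_cases (y - 2 * P) with ⟨h2, h3⟩ | ⟨h2, h3⟩ <;> linarith
    have h2 : f y ≤ f |y - 2 * P| :=
      hf_anti (abs_nonneg (y - 2 * P)) (le_trans (abs_nonneg (y - 2 * P)) habs_le) habs_le
    have h3 := habs (y - 2 * P)
    linarith
  -- the retention probability β
  set β : ℝ → ℝ := fun p => if P ≤ p then 1 else (if f p = 0 then 1 else gt p / f p)
    with hβ_def
  have hβ_meas : Measurable β := by
    apply Measurable.ite measurableSet_Ici measurable_const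
    exact Measurable.ite (hfm (measurableSet_singleton 0)) measurable_const
      (hgt_meas.div hfm)
  have hβ_nonneg : ∀ p, 0 ≤ β p := by
    intro p; rw [hβ_def]; dsimp only
    split_ifs with h1 h2
    · norm_num
    · norm_num
    · exact div_nonneg (hgt_nonneg p) (hf_nonneg p)
  have hβ_le : ∀ p, β p ≤ 1 := by
    intro p; rw [hβ_def]; dsimp only
    split_ifs with h1 h2
    · exact le_refl 1
    · norm_num
    · have hfp : 0 < f p := lt_of_le_of_ne (hf_nonneg p) (Ne.symm h2)
      rw [div_le_one hfp]
      exact hgt_le p (not_le.mp h1)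
  have hβ_one : ∀ p, P ≤ p → β p = 1 := by
    intro p hp; rw [hβ_def]; dsimp only; rw [if_pos hp]
  have hβf : ∀ p, p < P → β p * f p = gt p := by
    intro p hp
    rw [hβ_def]; dsimp only
    rw [if_neg (not_le.mpr hp)]
    by_cases h2 : f p = 0
    · rw [if_pos h2, h2, mul_zero, hgt_zero p hp h2]
    · rw [if_neg h2, div_mul_cancel₀ _ h2]
  have h1βf : ∀ p, (1 - β p) * f p = (Iio P).indicator (fun q => f q - gt q) p := by
    intro p
    by_cases hp : p < P
    · rw [Set.indicator_of_mem (Set.mem_Iio.mpr hp), sub_mul, one_mul, hβf p hp]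
    · rw [Set.indicator_of_notMem (fun h => hp (Set.mem_Iio.mp h)), hβ_one p (not_lt.mp hp)]
      ring
  have hbf : ∀ q, β q * f q = (Iio P).indicator gt q + (Ici P).indicator f q := by
    intro q
    by_cases hq : q < P
    · rw [hβf q hq, Set.indicator_of_mem (Set.mem_Iio.mpr hq),
        Set.indicator_of_notMem (fun h => absurd (Set.mem_Ici.mp h) (not_le.mpr hq)),
        add_zero]
    · rw [hβ_one q (not_lt.mp hq), one_mul,
        Set.indicator_of_notMem (fun h => hq (Set.mem_Iio.mp h)),
        Set.indicator_of_mem (Set.mem_Ici.mpr (not_lt.mp hq)), zero_add]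
  -- the target measure ν on [P, ∞)
  set d : ℝ → ENNReal :=
    fun y => (Ici P).indicator (fun y => ENNReal.ofReal ((f (y - 2 * P) - f y) / 2)) y
    with hd_def
  have hd_meas : Measurable d :=
    (ENNReal.measurable_ofReal.comp ((hf2m.sub hfm).div_const 2)).indicator
      measurableSet_Ici
  set ν : Measure ℝ := (ENNReal.ofReal m)⁻¹ • (volume.withDensity d) with hν_def
  have hm_ne : ENNReal.ofReal m ≠ 0 := by
    rw [Ne, ENNReal.ofReal_eq_zero]; exact not_le.mpr hm_pos
  have hν_apply : ∀ A : Set ℝ, MeasurableSet A →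
      ν A = (ENNReal.ofReal m)⁻¹
        * ENNReal.ofReal (∫ y in A ∩ Ici P, (f (y - 2 * P) - f y) / 2) := by
    intro A hA
    rw [hν_def, Measure.smul_apply, smul_eq_mul, withDensity_apply _ hA]
    congr 1
    rw [hd_def]
    rw [lintegral_indicator measurableSet_Ici, Measure.restrict_restrict measurableSet_Ici,
      Set.inter_comm]
    rw [← ofReal_integral_eq_lintegral_ofReal (hh_int.integrableOn)
      ((ae_restrict_iff' (hA.inter measurableSet_Ici)).mpr
        (ae_of_all _ fun y hy => hh_nonneg y hy.2))]
  have hν_univ : ν Set.univ = 1 := by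
    rw [hν_apply _ MeasurableSet.univ, Set.univ_inter, hIciInt]
    exact ENNReal.inv_mul_cancel hm_ne ENNReal.ofReal_ne_top
  haveI hν_prob : IsProbabilityMeasure ν := ⟨hν_univ⟩
  have hν_Iio : ν (Iio P) = 0 := by
    rw [hν_apply _ measurableSet_Iio, Set.Iio_inter_Ici, Set.Ico_self]
    simp
  have hν_singleton : ∀ p : ℝ, ν {p} = 0 := by
    intro p
    rw [hν_apply _ (measurableSet_singleton p)]
    rw [setIntegral_measure_zero _
      (measure_mono_null Set.inter_subset_left Real.volume_singleton)]
    simp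
  have hν_compl : ∀ p : ℝ, ν {p}ᶜ = 1 := by
    intro p
    rw [prob_compl_eq_one_sub (measurableSet_singleton p), hν_singleton p, tsub_zero]
  -- the kernel
  set κfun : ℝ → Measure ℝ :=
    fun p => ENNReal.ofReal (β p) • Measure.dirac p + ENNReal.ofReal (1 - β p) • ν
    with hκfun_def
  have hκfun_meas : Measurable κfun := by
    apply Measure.measurable_of_measurable_coe
    intro s hs
    have : (fun p => κfun p s)
        = fun p => ENNReal.ofReal (β p) * s.indicator 1 p
          + ENNReal.ofReal (1 - β p) * ν s := by
      funext p
      rw [hκfun_def]; dsimp only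
      rw [Measure.add_apply, Measure.smul_apply, Measure.smul_apply, smul_eq_mul,
        smul_eq_mul, Measure.dirac_apply' _ hs]
    rw [this]
    exact ((ENNReal.measurable_ofReal.comp hβ_meas).mul
      (measurable_one.indicator hs)).add
      ((ENNReal.measurable_ofReal.comp (measurable_const.sub hβ_meas)).mul
        measurable_const)
  set κ : Kernel ℝ ℝ := ⟨κfun, hκfun_meas⟩ with hκ_def
  have hκ_app : ∀ p, κ p
      = ENNReal.ofReal (β p) • Measure.dirac p + ENNReal.ofReal (1 - β p) • ν :=
    fun p => rfl
  refine ⟨κ, ?_, ?_, ?_, ?_, ?_, ?_⟩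
  -- Markov
  · constructor
    intro p
    constructor
    rw [hκ_app, Measure.add_apply, Measure.smul_apply, Measure.smul_apply,
      smul_eq_mul, smul_eq_mul, measure_univ, measure_univ, mul_one, mul_one,
      ← ENNReal.ofReal_add (hβ_nonneg p) (by linarith [hβ_le p])]
    norm_num
  -- (i)
  · intro p hp
    rw [hκ_app, hβ_one p hp]
    simp
  -- (ii)
  · intro p hp
    rw [hκ_app, Measure.add_apply, Measure.smul_apply, Measure.smul_apply,
      smul_eq_mul, smul_eq_mul]
    have hd0 : Measure.dirac p (Iio P \ {p}) = 0 := by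
      rw [Measure.dirac_apply' _ (measurableSet_Iio.diff (measurableSet_singleton p))]
      exact Set.indicator_of_notMem (fun h => h.2 rfl) _
    have hν0 : ν (Iio P \ {p}) = 0 :=
      measure_mono_null Set.diff_subset hν_Iio
    rw [hd0, hν0, mul_zero, mul_zero, add_zero]
  -- (iii)
  · have hcompl_eq : (fun p => (κ p {p}ᶜ).toReal) = fun p => 1 - β p := by
      funext p
      rw [hκ_app, Measure.add_apply, Measure.smul_apply, Measure.smul_apply,
        smul_eq_mul, smul_eq_mul, hν_compl p, mul_one]
      have hd0 : Measure.dirac p {p}ᶜ = 0 := by simp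
      rw [hd0, mul_zero, zero_add, ENNReal.toReal_ofReal (by linarith [hβ_le p])]
    rw [hcompl_eq, hμint (fun p => 1 - β p) (measurable_const.sub hβ_meas)]
    have h1 : (fun p => (1 - β p) * f p) = (Iio P).indicator (fun q => f q - gt q) :=
      funext h1βf
    rw [h1, integral_indicator measurableSet_Iio]
    have h2 : ∀ y, f y - gt y = (f y - f (y - 2 * P)) / 2 := by
      intro y; rw [hgt]; ring
    simp only [h2]
    exact hIioInt
  -- (iv)
  · intro A hA
    set c : ℝ := (ν A).toReal with hc_def
    have hIA_nn : 0 ≤ ∫ y in A ∩ Ici P, (f (y - 2 * P) - f y) / 2 :=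
      setIntegral_nonneg (hA.inter measurableSet_Ici) (fun y hy => hh_nonneg y hy.2)
    have hc_eq : c = m⁻¹ * ∫ y in A ∩ Ici P, (f (y - 2 * P) - f y) / 2 := by
      rw [hc_def, hν_apply A hA, ENNReal.toReal_mul, ENNReal.toReal_inv,
        ENNReal.toReal_ofReal hm_pos.le, ENNReal.toReal_ofReal hIA_nn]
    have hcm : c * m = ∫ y in A ∩ Ici P, (f (y - 2 * P) - f y) / 2 := by
      rw [hc_eq]; field_simp
    have hpt : ∀ p, (κ p A).toReal
        = β p * A.indicator (fun _ => (1 : ℝ)) p + (1 - β p) * c := by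
      intro p
      rw [hκ_app, Measure.add_apply, Measure.smul_apply, Measure.smul_apply,
        smul_eq_mul, smul_eq_mul, Measure.dirac_apply' _ hA]
      have hfin1 : ENNReal.ofReal (β p) * A.indicator 1 p ≠ ⊤ :=
        ENNReal.mul_ne_top ENNReal.ofReal_ne_top
          (by by_cases hp : p ∈ A <;> simp [hp])
      have hfin2 : ENNReal.ofReal (1 - β p) * ν A ≠ ⊤ :=
        ENNReal.mul_ne_top ENNReal.ofReal_ne_top (measure_ne_top ν A)
      rw [ENNReal.toReal_add hfin1 hfin2, ENNReal.toReal_mul, ENNReal.toReal_mul,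
        ENNReal.toReal_ofReal (hβ_nonneg p),
        ENNReal.toReal_ofReal (by linarith [hβ_le p])]
      congr 1
      congr 1
      by_cases hp : p ∈ A <;> simp [hp]
    have hmeas_pt : Measurable (fun p => (κ p A).toReal) := by
      have : (fun p => (κ p A).toReal)
          = fun p => β p * A.indicator (fun _ => (1 : ℝ)) p + (1 - β p) * c :=
        funext hpt
      rw [this]
      exact ((hβ_meas.mul (measurable_const.indicator hA)).add
        ((measurable_const.sub hβ_meas).mul measurable_const))
    rw [hμint _ hmeas_pt]
    have hrw : (fun p => (κ p A).toReal * f p)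
        = fun p => A.indicator (fun q => β q * f q) p
          + c * ((Iio P).indicator (fun q => f q - gt q) p) := by
      funext p
      rw [hpt p, ← h1βf p]
      by_cases hp : p ∈ A
      · rw [Set.indicator_of_mem hp, Set.indicator_of_mem hp]; ring
      · rw [Set.indicator_of_notMem hp, Set.indicator_of_notMem hp]; ring
    rw [hrw]
    have hint1 : Integrable ((Iio P).indicator gt + (Ici P).indicator f) :=
      (hgt_int.indicator measurableSet_Iio).add (hf_int.indicator measurableSet_Ici)
    have he1 : Integrable (fun p => A.indicator (fun q => β q * f q) p) := by
      have : (fun q => β q * f q) = (Iio P).indicator gt + (Ici P).indicator f :=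
        funext hbf
      rw [this]
      exact hint1.indicator hA
    have he2 : Integrable (fun p => c * ((Iio P).indicator (fun q => f q - gt q) p)) :=
      (((hf_int.sub hgt_int).indicator measurableSet_Iio).const_mul c)
    rw [integral_add he1 he2]
    have hval1 : ∫ p, A.indicator (fun q => β q * f q) p
        = (∫ y in A ∩ Iio P, gt y) + ∫ y in A ∩ Ici P, f y := by
      have hb : (fun q => β q * f q) = (Iio P).indicator gt + (Ici P).indicator f :=
        funext hbf
      rw [hb, integral_indicator hA]
      simp only [Pi.add_apply]
      rw [integral_add ((hgt_int.indicator measurableSet_Iio).integrableOn)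
        ((hf_int.indicator measurableSet_Ici).integrableOn)]
      rw [setIntegral_indicator measurableSet_Iio, setIntegral_indicator measurableSet_Ici]
    have hval2 : ∫ p, c * ((Iio P).indicator (fun q => f q - gt q) p)
        = c * m := by
      rw [integral_const_mul, integral_indicator measurableSet_Iio]
      congr 1
      have h2 : ∀ y, f y - gt y = (f y - f (y - 2 * P)) / 2 := by
        intro y; rw [hgt]; ring
      simp only [h2]
      exact hIioInt
    rw [hval1, hval2, hcm]
    -- now: ∫_{A∩Iio P} gt + ∫_{A∩Ici P} f + ∫_{A∩Ici P} h = ∫_A gt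
    have hfh : (∫ y in A ∩ Ici P, f y) + (∫ y in A ∩ Ici P, (f (y - 2 * P) - f y) / 2)
        = ∫ y in A ∩ Ici P, gt y := by
      rw [← integral_add (hf_int.integrableOn) (hh_int.integrableOn)]
      apply setIntegral_congr_fun (hA.inter measurableSet_Ici)
      intro y _
      rw [hgt]; ring
    have hsplitA : ∫ y in A, gt y
        = (∫ y in A ∩ Iio P, gt y) + ∫ y in A ∩ Ici P, gt y := by
      have hpart : gt = fun y => (Iio P).indicator gt y + (Ici P).indicator gt y := by
        funext y
        by_cases hy : y < P
        · rw [Set.indicator_of_mem (Set.mem_Iio.mpr hy),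
            Set.indicator_of_notMem (fun h => absurd (Set.mem_Ici.mp h) (not_le.mpr hy)),
            add_zero]
        · rw [Set.indicator_of_notMem (fun h => hy (Set.mem_Iio.mp h)),
            Set.indicator_of_mem (Set.mem_Ici.mpr (not_lt.mp hy)), zero_add]
      calc ∫ y in A, gt y
          = ∫ y in A, ((Iio P).indicator gt y + (Ici P).indicator gt y) := by
            rw [← hpart]
        _ = (∫ y in A, (Iio P).indicator gt y) + ∫ y in A, (Ici P).indicator gt y := by
            rw [integral_add ((hgt_int.indicator measurableSet_Iio).integrableOn)
              ((hgt_int.indicator measurableSet_Ici).integrableOn)]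
        _ = (∫ y in A ∩ Iio P, gt y) + ∫ y in A ∩ Ici P, gt y := by
            rw [setIntegral_indicator measurableSet_Iio,
              setIntegral_indicator measurableSet_Ici]
    rw [hsplitA]
    linarith
  -- (vi)
  · intro x
    rw [hgt, hgt]
    rw [show P + x - 2 * P = -(P - x) by ring, show P - x - 2 * P = -(P + x) by ring,
      hf_sym, hf_sym]
    ring
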